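/- Let L : ℝ[X] → ℝ[X] be a linear map that is skew symmetric with respect to the inner product, i.e. ⟨L f, g⟩ = −⟨f, L g⟩ for all polynomials f, g, and that satisfies L(x^n) = γ_n x^{n+1} + (terms of degree ≤ n) with γ_n ≠ 0 for every n ≥ 0. Then for every n ≥ 1 the lowering relation −γ_n (x − B_n) p_n(x) + (L p_n)(x) = −(γ_n + γ_{n−1}) C_n p_{n−1}(x) holds. -/

import Mathlib

open Polynomial MeasureTheory

/-- Integration of polynomial evaluation as a linear map. -/
noncomputable def Jl (μ : Measure ℝ)
    (hint : ∀ f : ℝ[X], Integrable (fun x => f.eval x) μ) : ℝ[X] →ₗ[ℝ] ℝ where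
  toFun f := ∫ x, f.eval x ∂μ
  map_add' f g := by
    simp only [eval_add]
    exact integral_add (hint f) (hint g)
  map_smul' a f := by
    simp only [eval_smul, smul_eq_mul, RingHom.id_apply]
    exact integral_const_mul a _

lemma Jl_mul (μ : Measure ℝ) (hint : ∀ f : ℝ[X], Integrable (fun x => f.eval x) μ)
    (f g : ℝ[X]) : Jl μ hint (f * g) = ∫ x, f.eval x * g.eval x ∂μ := by
  simp [Jl]

lemma Jl_C_mul (μ : Measure ℝ) (hint : ∀ f : ℝ[X], Integrable (fun x => f.eval x) μ)
    (a : ℝ) (f : ℝ[X]) : Jl μ hint (C a * f) = a * Jl μ hint f := by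
  rw [← smul_eq_C_mul, LinearMap.map_smul, smul_eq_mul]

lemma degree_le_of_lt_succ {r : ℝ[X]} {N : ℕ} (hr : r.degree < ((N + 1 : ℕ) : WithBot ℕ)) :
    r.degree ≤ (N : ℕ) := by
  rw [degree_le_iff_coeff_zero]
  intro m hm
  have hm' : N + 1 ≤ m := by exact_mod_cast hm
  exact (degree_lt_iff_coeff_zero _ _).mp hr m (by exact_mod_cast hm')

/-- Every polynomial of degree < N is a combination of p_0,...,p_{N-1}. -/
lemma span_lemma (p : ℕ → ℝ[X]) (k : ℕ → ℝ)
    (hdeg : ∀ n, (p n).degree = n) (hlead : ∀ n, (p n).leadingCoeff = k n)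
    (hk : ∀ n, k n ≠ 0) :
    ∀ N : ℕ, ∀ r : ℝ[X], r.degree < (N : ℕ) →
      ∃ c : ℕ → ℝ, r = ∑ j ∈ Finset.range N, C (c j) * p j := by
  intro N
  induction N with
  | zero =>
    intro r hr
    refine ⟨0, ?_⟩
    simp [degree_eq_bot.mp (Nat.WithBot.lt_zero_iff.mp (by exact_mod_cast hr))]
  | succ N ih =>
    intro r hr
    have hrN : r.degree ≤ (N : ℕ) := degree_le_of_lt_succ hr
    set a := r.coeff N / k N with ha
    have hcoeffp : (p N).coeff N = k N := by
      rw [← hlead N]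
      unfold leadingCoeff
      rw [natDegree_eq_of_degree_eq_some (hdeg N)]
    have h1 : (r - C a * p N).degree < (N : ℕ) := by
      rw [degree_lt_iff_coeff_zero]
      intro m hm
      rcases eq_or_lt_of_le hm with hm' | hm'
      · subst hm'
        simp only [coeff_sub, coeff_C_mul, hcoeffp, ha]
        rw [div_mul_cancel₀ _ (hk N), sub_self]
      · have h2 : r.coeff m = 0 := coeff_eq_zero_of_degree_lt (lt_of_le_of_lt hrN (by exact_mod_cast hm'))
        have h3 : (p N).coeff m = 0 := coeff_eq_zero_of_degree_lt (by rw [hdeg N]; exact_mod_cast hm')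
        simp [h2, h3]
    obtain ⟨c, hc⟩ := ih _ h1
    refine ⟨fun j => if j = N then a else c j, ?_⟩
    rw [Finset.sum_range_succ]
    have : ∑ j ∈ Finset.range N, C ((fun j => if j = N then a else c j) j) * p j
        = ∑ j ∈ Finset.range N, C (c j) * p j := by
      apply Finset.sum_congr rfl
      intro j hj
      simp [Nat.ne_of_lt (Finset.mem_range.mp hj)]
    rw [this, ← hc]
    simp

/-- p_n is orthogonal to anything of degree < n. -/
lemma orth_low (μ : Measure ℝ) (hint : ∀ f : ℝ[X], Integrable (fun x => f.eval x) μ)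
    (p : ℕ → ℝ[X]) (k h : ℕ → ℝ)
    (hdeg : ∀ n, (p n).degree = n) (hlead : ∀ n, (p n).leadingCoeff = k n)
    (hk : ∀ n, k n ≠ 0)
    (horth : ∀ n m, (∫ x, (p n).eval x * (p m).eval x ∂μ) = if n = m then h n else 0)
    (n : ℕ) (q : ℝ[X]) (hq : q.degree < (n : ℕ)) :
    Jl μ hint (p n * q) = 0 := by
  obtain ⟨c, hc⟩ := span_lemma p k hdeg hlead hk n q hq
  rw [hc, Finset.mul_sum]
  rw [map_sum]
  apply Finset.sum_eq_zero
  intro j hj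
  have : p n * (C (c j) * p j) = C (c j) * (p n * p j) := by ring
  rw [this, Jl_C_mul, Jl_mul, horth]
  simp [Nat.ne_of_gt (Finset.mem_range.mp hj)]

/-- Expansion coefficients against orthogonality: if orthogonal to all p_j, j < N, and
degree < N, then zero. -/
lemma eq_zero_of_orth (μ : Measure ℝ) (hint : ∀ f : ℝ[X], Integrable (fun x => f.eval x) μ)
    (p : ℕ → ℝ[X]) (k h : ℕ → ℝ)
    (hdeg : ∀ n, (p n).degree = n) (hlead : ∀ n, (p n).leadingCoeff = k n)
    (hk : ∀ n, k n ≠ 0) (hh : ∀ n, 0 < h n)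
    (horth : ∀ n m, (∫ x, (p n).eval x * (p m).eval x ∂μ) = if n = m then h n else 0)
    (N : ℕ) (r : ℝ[X]) (hr : r.degree < (N : ℕ))
    (horthr : ∀ j, j < N → Jl μ hint (r * p j) = 0) : r = 0 := by
  obtain ⟨c, hc⟩ := span_lemma p k hdeg hlead hk N r hr
  have hcz : ∀ j, j ∈ Finset.range N → C (c j) * p j = 0 := by
    intro j hj
    have hjN := Finset.mem_range.mp hj
    have h0 := horthr j hjN
    rw [hc] at h0
    rw [Finset.sum_mul, map_sum] at h0
    have : ∀ i ∈ Finset.range N, Jl μ hint (C (c i) * p i * p j)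
        = if i = j then c i * h i else 0 := by
      intro i _
      rw [mul_assoc, Jl_C_mul, Jl_mul, horth]
      split <;> simp
    rw [Finset.sum_congr rfl this, Finset.sum_ite_eq' (Finset.range N)] at h0
    simp only [hj, if_true] at h0
    have : c j = 0 := by
      rcases mul_eq_zero.mp h0 with h' | h'
      · exact h'
      · exact absurd h' (ne_of_gt (hh j))
    simp [this]
  rw [hc]
  exact Finset.sum_eq_zero hcz

/-- L does not raise degree by more than one. -/
lemma Ldeg_le (L : ℝ[X] →ₗ[ℝ] ℝ[X]) (γ : ℕ → ℝ)
    (hLdeg : ∀ n : ℕ, ∃ r : ℝ[X], r.degree ≤ (n : ℕ) ∧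
      L (X ^ n) = C (γ n) * X ^ (n + 1) + r) :
    ∀ (N : ℕ) (f : ℝ[X]), f.degree < (N : ℕ) → (L f).degree ≤ (N : ℕ) := by
  intro N f hf
  by_cases hf0 : f = 0
  · simp [hf0]
  have hnd : f.natDegree < N := (natDegree_lt_iff_degree_lt hf0).mpr hf
  rw [f.as_sum_range' N hnd, map_sum]
  refine (degree_sum_le _ _).trans (Finset.sup_le ?_)
  intro i hi
  have hiN := Finset.mem_range.mp hi
  rw [← C_mul_X_pow_eq_monomial, ← smul_eq_C_mul, LinearMap.map_smul]
  refine (degree_smul_le _ _).trans ?_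
  obtain ⟨r, hr, hLX⟩ := hLdeg i
  rw [hLX]
  refine (degree_add_le _ _).trans (max_le ?_ ?_)
  · exact (degree_C_mul_X_pow_le _ _).trans (by exact_mod_cast Nat.succ_le_of_lt hiN)
  · exact hr.trans (by exact_mod_cast le_of_lt hiN)

/-- Structure of L p_j. -/
lemma Lp_struct (L : ℝ[X] →ₗ[ℝ] ℝ[X]) (γ : ℕ → ℝ)
    (hLdeg : ∀ n : ℕ, ∃ r : ℝ[X], r.degree ≤ (n : ℕ) ∧
      L (X ^ n) = C (γ n) * X ^ (n + 1) + r)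
    (p : ℕ → ℝ[X]) (k : ℕ → ℝ)
    (hdeg : ∀ n, (p n).degree = n) (hlead : ∀ n, (p n).leadingCoeff = k n)
    (hk : ∀ n, k n ≠ 0) :
    ∀ j, ∃ s : ℝ[X], s.degree ≤ (j : ℕ) ∧
      L (p j) = C (γ j * k j) * X ^ (j + 1) + s := by
  intro j
  obtain ⟨r, hr, hLX⟩ := hLdeg j
  have hpj0 : p j ≠ 0 := by
    intro h0
    have hd := hdeg j
    rw [h0, degree_zero] at hd
    exact absurd hd (by simp)
  have ht : (p j - C (k j) * X ^ j).degree < ((j : ℕ) : WithBot ℕ) := by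
    have h1 : (p j).degree = (C (k j) * X ^ j).degree := by
      rw [hdeg j, degree_C_mul_X_pow _ (hk j)]
    have h2 : (p j).leadingCoeff = (C (k j) * X ^ j).leadingCoeff := by
      rw [hlead j, leadingCoeff_C_mul_X_pow]
    have := degree_sub_lt h1 hpj0 h2
    rwa [hdeg j] at this
  set t := p j - C (k j) * X ^ j with htdef
  have hps : p j = C (k j) * X ^ j + t := by rw [htdef]; ring
  refine ⟨C (k j) * r + L t, ?_, ?_⟩
  · refine (degree_add_le _ _).trans (max_le ?_ ?_)
    · calc (C (k j) * r).degree ≤ _ := degree_mul_le _ _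
        _ ≤ 0 + (j : WithBot ℕ) := add_le_add (degree_C_le) hr
        _ = (j : WithBot ℕ) := by rw [zero_add]
    · exact Ldeg_le L γ hLdeg j t ht
  · rw [hps, map_add, ← smul_eq_C_mul, LinearMap.map_smul, hLX, smul_eq_C_mul, C_mul]
    ring

/-- Value of ∫ p_n · x^n. -/
lemma Jl_p_Xpow (μ : Measure ℝ) (hint : ∀ f : ℝ[X], Integrable (fun x => f.eval x) μ)
    (p : ℕ → ℝ[X]) (k h : ℕ → ℝ)
    (hdeg : ∀ n, (p n).degree = n) (hlead : ∀ n, (p n).leadingCoeff = k n)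
    (hk : ∀ n, k n ≠ 0)
    (horth : ∀ n m, (∫ x, (p n).eval x * (p m).eval x ∂μ) = if n = m then h n else 0)
    (n : ℕ) : Jl μ hint (p n * X ^ n) = h n / k n := by
  have hpn0 : p n ≠ 0 := by
    intro h0
    have hd := hdeg n
    rw [h0, degree_zero] at hd
    exact absurd hd (by simp)
  have ht : (p n - C (k n) * X ^ n).degree < ((n : ℕ) : WithBot ℕ) := by
    have h1 : (p n).degree = (C (k n) * X ^ n).degree := by
      rw [hdeg n, degree_C_mul_X_pow _ (hk n)]
    have h2 : (p n).leadingCoeff = (C (k n) * X ^ n).leadingCoeff := by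
      rw [hlead n, leadingCoeff_C_mul_X_pow]
    have := degree_sub_lt h1 hpn0 h2
    rwa [hdeg n] at this
  have hsplit : p n * p n = C (k n) * (p n * X ^ n) + p n * (p n - C (k n) * X ^ n) := by
    ring
  have h1 : Jl μ hint (p n * p n) = h n := by rw [Jl_mul, horth]; simp
  have h2 : Jl μ hint (p n * (p n - C (k n) * X ^ n)) = 0 :=
    orth_low μ hint p k h hdeg hlead hk horth n _ ht
  have h3 : h n = k n * Jl μ hint (p n * X ^ n) := by
    rw [← h1, hsplit, map_add, Jl_C_mul, h2, add_zero]
  rw [h3, mul_comm (k n), mul_div_assoc, div_self (hk n), mul_one]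

theorem lowering_relation_skew_symmetric
    (μ : Measure ℝ)
    (hint : ∀ f : ℝ[X], Integrable (fun x => f.eval x) μ)
    (p : ℕ → ℝ[X]) (k h A B Cc : ℕ → ℝ)
    (hdeg : ∀ n, (p n).degree = n)
    (hlead : ∀ n, (p n).leadingCoeff = k n)
    (hk : ∀ n, k n ≠ 0)
    (hh : ∀ n, 0 < h n)
    (horth : ∀ n m, (∫ x, (p n).eval x * (p m).eval x ∂μ) = if n = m then h n else 0)
    (hA : ∀ n, A n = k n / k (n + 1))
    (hC : ∀ n, 1 ≤ n → Cc n = A (n - 1) * h n / h (n - 1))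
    (hrec : ∀ n, X * p n =
      C (A n) * p (n + 1) + C (B n) * p n +
        C (Cc n) * (if n = 0 then 0 else p (n - 1)))
    (L : ℝ[X] →ₗ[ℝ] ℝ[X]) (γ : ℕ → ℝ)
    (hskew : ∀ f g : ℝ[X],
      (∫ x, (L f).eval x * g.eval x ∂μ) = - ∫ x, f.eval x * (L g).eval x ∂μ)
    (hγ : ∀ n, γ n ≠ 0)
    (hLdeg : ∀ n : ℕ, ∃ r : ℝ[X], r.degree ≤ (n : ℕ) ∧
      L (X ^ n) = C (γ n) * X ^ (n + 1) + r) :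
    ∀ n : ℕ, 1 ≤ n →
      - (C (γ n) * (X - C (B n)) * p n) + L (p n) =
        - (C ((γ n + γ (n - 1)) * Cc n) * p (n - 1)) := by
  intro n hn
  obtain ⟨m, rfl⟩ : ∃ m, n = m + 1 := ⟨n - 1, (Nat.succ_pred_eq_of_pos hn).symm⟩
  simp only [Nat.add_sub_cancel]
  -- repackaged facts
  have horthJ : ∀ i j, Jl μ hint (p i * p j) = if i = j then h i else 0 := by
    intro i j; rw [Jl_mul]; exact horth i j
  have hskewJ : ∀ f g : ℝ[X], Jl μ hint (L f * g) = - Jl μ hint (f * L g) := by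
    intro f g; rw [Jl_mul, Jl_mul]; exact hskew f g
  -- recurrence reformulated
  have hrec' : (X - C (B (m + 1))) * p (m + 1)
      = C (A (m + 1)) * p (m + 2) + C (Cc (m + 1)) * p m := by
    have hh1 := hrec (m + 1)
    simp only [Nat.succ_ne_zero, if_false, Nat.add_sub_cancel] at hh1
    linear_combination hh1
  obtain ⟨s, hs, hLp⟩ := Lp_struct L γ hLdeg p k hdeg hlead hk (m + 1)
  set r : ℝ[X] := -(C (γ (m + 1)) * (X - C (B (m + 1))) * p (m + 1)) + L (p (m + 1))
      + C ((γ (m + 1) + γ m) * Cc (m + 1)) * p m with hrdef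
  suffices hr : r = 0 by linear_combination hr
  -- degree bound
  have hpn0 : p (m + 1) ≠ 0 := fun h0 =>
    hk (m + 1) (by rw [← hlead (m + 1), h0, leadingCoeff_zero])
  have ht : (p (m + 1) - C (k (m + 1)) * X ^ (m + 1)).degree < ((m + 1 : ℕ) : WithBot ℕ) := by
    have h1 : (p (m + 1)).degree = (C (k (m + 1)) * X ^ (m + 1)).degree := by
      rw [hdeg (m + 1), degree_C_mul_X_pow _ (hk (m + 1))]
    have h2 : (p (m + 1)).leadingCoeff = (C (k (m + 1)) * X ^ (m + 1)).leadingCoeff := by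
      rw [hlead (m + 1), leadingCoeff_C_mul_X_pow]
    have := degree_sub_lt h1 hpn0 h2
    rwa [hdeg (m + 1)] at this
  have hCmul : ∀ (a : ℝ) (f : ℝ[X]), (C a * f).degree ≤ f.degree := by
    intro a f
    refine (degree_mul_le _ _).trans ?_
    calc (C a).degree + f.degree ≤ 0 + f.degree := add_le_add degree_C_le le_rfl
      _ = f.degree := zero_add _
  have hident : r = C (γ (m + 1) * B (m + 1)) * p (m + 1)
      - C (γ (m + 1)) * (X * (p (m + 1) - C (k (m + 1)) * X ^ (m + 1)))
      + s + C ((γ (m + 1) + γ m) * Cc (m + 1)) * p m := by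
    rw [hrdef, hLp]
    simp only [C_mul]
    ring
  have hdegr : r.degree < ((m + 2 : ℕ) : WithBot ℕ) := by
    have hb : r.degree ≤ ((m + 1 : ℕ) : WithBot ℕ) := by
      rw [hident]
      refine (degree_add_le _ _).trans (max_le ((degree_add_le _ _).trans (max_le
        ((degree_sub_le _ _).trans (max_le ?_ ?_)) ?_)) ?_)
      · exact (hCmul _ _).trans (le_of_eq (hdeg (m + 1)))
      · refine (hCmul _ _).trans ((degree_mul_le _ _).trans ?_)
        have h1 : (p (m + 1) - C (k (m + 1)) * X ^ (m + 1)).degree ≤ ((m : ℕ) : WithBot ℕ) :=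
          degree_le_of_lt_succ ht
        calc X.degree + (p (m + 1) - C (k (m + 1)) * X ^ (m + 1)).degree
            ≤ 1 + ((m : ℕ) : WithBot ℕ) := add_le_add (le_of_eq degree_X) h1
          _ = ((m + 1 : ℕ) : WithBot ℕ) := by push_cast; ring
      · exact hs
      · refine (hCmul _ _).trans ?_
        rw [hdeg m]
        exact_mod_cast Nat.le_succ m
    refine lt_of_le_of_lt hb ?_
    exact_mod_cast Nat.lt_succ_self (m + 1)
  -- orthogonality of r against each p j
  have horthr : ∀ j, j < m + 2 → Jl μ hint (r * p j) = 0 := by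
    intro j hj
    have hexp : Jl μ hint (r * p j)
        = -(γ (m + 1) * Jl μ hint (((X - C (B (m + 1))) * p (m + 1)) * p j))
          + Jl μ hint (L (p (m + 1)) * p j)
          + ((γ (m + 1) + γ m) * Cc (m + 1)) * Jl μ hint (p m * p j) := by
      have hrw : r * p j = -(C (γ (m + 1)) * (((X - C (B (m + 1))) * p (m + 1)) * p j))
          + L (p (m + 1)) * p j
          + C ((γ (m + 1) + γ m) * Cc (m + 1)) * (p m * p j) := by
        rw [hrdef]; ring
      rw [hrw, map_add, map_add, map_neg, Jl_C_mul, Jl_C_mul]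
    have hpiece1 : Jl μ hint (((X - C (B (m + 1))) * p (m + 1)) * p j)
        = Cc (m + 1) * (if m = j then h m else 0) := by
      rw [hrec', add_mul, mul_assoc, mul_assoc, map_add, Jl_C_mul, Jl_C_mul, horthJ, horthJ]
      have : ¬ (m + 2 = j) := by omega
      simp [this]
    rcases Nat.lt_or_ge j (m + 1) with hjm | hjm
    · -- j ≤ m - 1 or j = m : handle j < m + 1, i.e. j ≤ m
      obtain ⟨s', hs', hLq⟩ := Lp_struct L γ hLdeg p k hdeg hlead hk j
      have hpiece2 : Jl μ hint (L (p (m + 1)) * p j)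
          = -(γ j * k j * Jl μ hint (p (m + 1) * X ^ (j + 1))) := by
        rw [hskewJ, hLq]
        have hrw2 : p (m + 1) * (C (γ j * k j) * X ^ (j + 1) + s')
            = C (γ j * k j) * (p (m + 1) * X ^ (j + 1)) + p (m + 1) * s' := by ring
        rw [hrw2, map_add, Jl_C_mul]
        have h0 : Jl μ hint (p (m + 1) * s') = 0 := by
          refine orth_low μ hint p k h hdeg hlead hk horth (m + 1) s' ?_
          refine lt_of_le_of_lt hs' ?_
          exact_mod_cast Nat.lt_succ_of_le (Nat.lt_succ_iff.mp hjm)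
        rw [h0, add_zero]
      rcases Nat.lt_or_ge j m with hjm2 | hjm2
      · -- j < m
        have hx : Jl μ hint (p (m + 1) * X ^ (j + 1)) = 0 := by
          refine orth_low μ hint p k h hdeg hlead hk horth (m + 1) (X ^ (j + 1)) ?_
          rw [degree_X_pow]
          exact_mod_cast Nat.succ_lt_succ hjm2
        have hmj : ¬ (m = j) := by omega
        rw [hexp, hpiece1, hpiece2, hx, horthJ]
        simp [hmj]
      · -- j = m
        have hjeq : m = j := by omega
        subst hjeq
        have hx : Jl μ hint (p (m + 1) * X ^ (m + 1)) = h (m + 1) / k (m + 1) :=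
          Jl_p_Xpow μ hint p k h hdeg hlead hk horth (m + 1)
        have hCc := hC (m + 1) (by omega)
        simp only [Nat.add_sub_cancel] at hCc
        rw [hexp, hpiece1, hpiece2, hx, horthJ, hCc, hA m]
        simp only [if_pos rfl, eq_self_iff_true, if_true]
        have hne1 : k (m + 1) ≠ 0 := hk (m + 1)
        have hne2 : h m ≠ 0 := (hh m).ne'
        field_simp
        ring
    · -- j = m + 1
      have hjeq : j = m + 1 := by omega
      subst hjeq
      have hself : Jl μ hint (L (p (m + 1)) * p (m + 1)) = 0 := by
        have e := hskewJ (p (m + 1)) (p (m + 1))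
        rw [mul_comm (p (m + 1)) (L (p (m + 1)))] at e
        linarith
      rw [hexp, hpiece1, hself]
      have h1 : ¬ (m = m + 1) := by omega
      have h2 : ¬ (m + 1 = m + 1) = False := by simp
      rw [horthJ]
      simp [h1]
  exact eq_zero_of_orth μ hint p k h hdeg hlead hk hh horth (m + 2) r hdegr horthr
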